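/- Every unbalanced signed complete graph on n ≥ 3 vertices satisfies χ(G) ≤ n − 1. -/

import Mathlib

/-- The colour set `M_n`: `{±1,…,±k}` if `n = 2k`, and `{0,±1,…,±k}` if `n = 2k+1`. -/
def Mset (n : ℕ) : Set ℤ := {x | 2 * x.natAbs ≤ n ∧ (x ≠ 0 ∨ n % 2 = 1)}

/-- `σ` is a signature: symmetric with values in `{+1, -1}`. -/
def IsSignature {V : Type*} (σ : V → V → ℤ) : Prop :=
  (∀ u v, σ u v = σ v u) ∧ (∀ u v, σ u v = 1 ∨ σ u v = -1)

/-- A proper colouring of the signed graph `(G, σ)`. -/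
def IsProperSignedColoring {V : Type*} (G : SimpleGraph V) (σ : V → V → ℤ) (φ : V → ℤ) : Prop :=
  ∀ u v, G.Adj u v → φ u ≠ σ u v * φ v

/-- `(G, σ)` admits a proper colouring with colours in `M_n`. -/
def SignedColorable {V : Type*} (G : SimpleGraph V) (σ : V → V → ℤ) (n : ℕ) : Prop :=
  ∃ φ : V → ℤ, IsProperSignedColoring G σ φ ∧ ∀ v, φ v ∈ Mset n

/-- The chromatic number of the signed graph `(G, σ)`. -/
noncomputable def signedChromaticNumber {V : Type*} (G : SimpleGraph V) (σ : V → V → ℤ) : ℕ :=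
  sInf {n | SignedColorable G σ n}

/-- A signed graph is balanced if it is switching equivalent to the all-positive signature;
equivalently every cycle has positive sign product. -/
def SignBalanced {V : Type*} (G : SimpleGraph V) (σ : V → V → ℤ) : Prop :=
  ∃ θ : V → ℤ, (∀ v, θ v = 1 ∨ θ v = -1) ∧ ∀ u v, G.Adj u v → σ u v = θ u * θ v


/-- Every unbalanced signed complete graph on `n ≥ 3` vertices has `χ(G) ≤ n − 1`. -/
theorem unbalanced_complete_chromatic_le
    {V : Type*} [Fintype V] (σ : V → V → ℤ) (hσ : IsSignature σ)
    (hcard : 3 ≤ Fintype.card V) (hunb : ¬ SignBalanced (⊤ : SimpleGraph V) σ) :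
    signedChromaticNumber (⊤ : SimpleGraph V) σ ≤ Fintype.card V - 1 := by
  classical
  obtain ⟨hsymm, hpm⟩ := hσ
  have htri : ∃ a b c : V, a ≠ b ∧ a ≠ c ∧ b ≠ c ∧ σ a b * σ b c * σ a c = -1 := by
      classical
      by_contra hcon
      push_neg at hcon
      apply hunb
      have : Nonempty V := Fintype.card_pos_iff.mp (by omega)
      obtain ⟨a⟩ := this
      refine ⟨fun v => if v = a then 1 else σ a v, fun v => ?_, fun u v huv => ?_⟩
      · by_cases h : v = a
        · simp [h]
        · simpa [h] using hpm a v
      · rw [SimpleGraph.top_adj] at huv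
        beta_reduce
        by_cases hu : u = a
        · have hva : v ≠ a := fun h => huv (hu.trans h.symm)
          rw [if_pos hu, if_neg hva, hu, one_mul]
        · by_cases hv : v = a
          · rw [if_neg hu, if_pos hv, mul_one, hv, hsymm u a]
          · simp only [if_neg hu, if_neg hv]
            have h3 := hcon a u v (fun h => hu h.symm) (fun h => hv h.symm) huv
            rcases hpm a u with h1|h1 <;> rcases hpm u v with h2|h2 <;> rcases hpm a v with h4|h4 <;>
              rw [h1, h2, h4] at h3 ⊢ <;> revert h3 <;> norm_num
  obtain ⟨a, b, c, hab, hac, hbc, hneg⟩ := htri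
  have hcol : SignedColorable (⊤ : SimpleGraph V) σ (Fintype.card V - 1) := by
      classical
      set n := Fintype.card V with hn
      set s : Finset V := {a, b, c} with hs
      have hscard : s.card = 3 := by
        rw [hs, Finset.card_insert_of_notMem (by simp [hab, hac]),
          Finset.card_insert_of_notMem (by simp [hbc]), Finset.card_singleton]
      set rest : Finset V := sᶜ with hrest
      have hm : rest.card = n - 3 := by rw [hrest, Finset.card_compl, hscard]
      have ecard : Fintype.card rest = n - 3 := by rw [Fintype.card_coe, hm]
      set e : rest ≃ Fin (n - 3) := (Fintype.equivFin rest).trans (finCongr ecard) with he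
      set φ : V → ℤ := fun v =>
        if h : v ∈ rest then
          if (e ⟨v, h⟩ : ℕ) % 2 = 1 then
            -σ ((e.symm ⟨(e ⟨v, h⟩ : ℕ) - 1,
                Nat.lt_of_le_of_lt (Nat.sub_le _ _) (e ⟨v, h⟩).isLt⟩ : rest) : V) v *
              (((e ⟨v, h⟩ : ℕ) / 2 + 2 : ℕ) : ℤ)
          else if (e ⟨v, h⟩ : ℕ) + 1 < n - 3 then (((e ⟨v, h⟩ : ℕ) / 2 + 2 : ℕ) : ℤ)
          else 0
        else if v = a then 1 else if v = b then -σ a b else -σ a c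
        with hφ
      -- membership facts for a b c
      have ha' : a ∉ rest := by simp [hrest, hs]
      have hb' : b ∉ rest := by simp [hrest, hs]
      have hc' : c ∉ rest := by simp [hrest, hs]
      have hva : φ a = 1 := by simp [hφ, dif_neg ha']
      have hvb : φ b = -σ a b := by simp [hφ, dif_neg hb', Ne.symm hab]
      have hvc : φ c = -σ a c := by simp [hφ, dif_neg hc', Ne.symm hac, Ne.symm hbc]
      -- value lemmas on rest
      have val_odd : ∀ v (h : v ∈ rest), (e ⟨v, h⟩ : ℕ) % 2 = 1 →
          φ v = -σ ((e.symm ⟨(e ⟨v, h⟩ : ℕ) - 1,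
                Nat.lt_of_le_of_lt (Nat.sub_le _ _) (e ⟨v, h⟩).isLt⟩ : rest) : V) v *
              (((e ⟨v, h⟩ : ℕ) / 2 + 2 : ℕ) : ℤ) := by
        intro v h h1
        simp only [hφ, dif_pos h, if_pos h1]
      have val_even : ∀ v (h : v ∈ rest), (e ⟨v, h⟩ : ℕ) % 2 = 0 → (e ⟨v, h⟩ : ℕ) + 1 < n - 3 →
          φ v = (((e ⟨v, h⟩ : ℕ) / 2 + 2 : ℕ) : ℤ) := by
        intro v h h1 h2
        simp only [hφ, dif_pos h]
        rw [if_neg (by omega), if_pos h2]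
      have val_last : ∀ v (h : v ∈ rest), (e ⟨v, h⟩ : ℕ) % 2 = 0 → ¬ ((e ⟨v, h⟩ : ℕ) + 1 < n - 3) →
          φ v = 0 := by
        intro v h h1 h2
        simp only [hφ, dif_pos h]
        rw [if_neg (by omega), if_neg h2]
      have habs_mul : ∀ (x y : V) (m : ℕ), ((-σ x y) * (m : ℤ)).natAbs = m := by
        intro x y m; rcases hpm x y with h|h <;> rw [h] <;> simp
      -- natAbs facts
      have habs_tri : ∀ v, v ∉ rest → (φ v).natAbs = 1 := by
        intro v hv
        have hv' : v ∈ s := by simpa [hrest] using hv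
        rw [hs] at hv'; simp only [Finset.mem_insert, Finset.mem_singleton] at hv'
        rcases hv' with h|h|h <;> rw [h]
        · rw [hva]; rfl
        · rw [hvb]; rcases hpm a b with h'|h' <;> rw [h'] <;> rfl
        · rw [hvc]; rcases hpm a c with h'|h' <;> rw [h'] <;> rfl
      have habs_rest : ∀ v (h : v ∈ rest),
          (φ v).natAbs = (e ⟨v, h⟩ : ℕ) / 2 + 2 ∨
          ((φ v).natAbs = 0 ∧ (e ⟨v, h⟩ : ℕ) % 2 = 0 ∧ (e ⟨v, h⟩ : ℕ) + 1 = n - 3) := by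
        intro v h
        by_cases h1 : (e ⟨v, h⟩ : ℕ) % 2 = 1
        · left; rw [val_odd v h h1, habs_mul]
        · have h1' : (e ⟨v, h⟩ : ℕ) % 2 = 0 := by omega
          by_cases h2 : (e ⟨v, h⟩ : ℕ) + 1 < n - 3
          · left; rw [val_even v h h1' h2]; exact Int.natAbs_natCast _
          · right
            refine ⟨by rw [val_last v h h1' h2]; rfl, h1', ?_⟩
            have := (e ⟨v, h⟩).isLt
            omega
      refine ⟨φ, ?_, ?_⟩
      · intro u v hadj
        rw [SimpleGraph.top_adj] at hadj
        have L1 : (φ u).natAbs ≠ (φ v).natAbs → φ u ≠ σ u v * φ v := by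
          intro hne heq
          apply hne; rw [heq]
          rcases hpm u v with h|h <;> rw [h] <;> simp
        by_cases hu : u ∈ rest <;> by_cases hv : v ∈ rest
        · -- both in rest
          have hij : (e ⟨u, hu⟩ : ℕ) ≠ (e ⟨v, hv⟩ : ℕ) := by
            intro h
            exact hadj (Subtype.mk_eq_mk.mp (e.injective (Fin.ext h)))
          set i := (e ⟨u, hu⟩ : ℕ) with hi
          set j := (e ⟨v, hv⟩ : ℕ) with hj
          have hilt : i < n - 3 := (e ⟨u, hu⟩).isLt
          have hjlt : j < n - 3 := (e ⟨v, hv⟩).isLt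
          by_cases hpair : (i % 2 = 0 ∧ j = i + 1) ∨ (j % 2 = 0 ∧ i = j + 1)
          · rcases hpair with ⟨hie, hji⟩ | ⟨hje, hij'⟩
            · -- u even paired with v = u's successor; partner of v is u
              have hjo : j % 2 = 1 := by omega
              have hpart : (⟨j - 1, Nat.lt_of_le_of_lt (Nat.sub_le _ _) (e ⟨v, hv⟩).isLt⟩ :
                  Fin (n - 3)) = e ⟨u, hu⟩ := by
                apply Fin.ext; simp; omega
              have hval : φ v = -σ u v * ((j / 2 + 2 : ℕ) : ℤ) := by
                rw [val_odd v hv hjo]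
                congr 2
                rw [hpart, Equiv.symm_apply_apply]
              rw [hval, val_even u hu hie (by omega)]
              rcases hpm u v with h|h <;> rw [h] <;>
                · have : i / 2 = j / 2 := by omega
                  rw [this]; omega
            · -- v even, u = v's successor; partner of u is v
              have hio : i % 2 = 1 := by omega
              have hpart : (⟨i - 1, Nat.lt_of_le_of_lt (Nat.sub_le _ _) (e ⟨u, hu⟩).isLt⟩ :
                  Fin (n - 3)) = e ⟨v, hv⟩ := by
                apply Fin.ext; simp; omega
              have hval : φ u = -σ v u * ((i / 2 + 2 : ℕ) : ℤ) := by
                rw [val_odd u hu hio]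
                congr 2
                rw [hpart, Equiv.symm_apply_apply]
              rw [hval, val_even v hv hje (by omega), hsymm v u]
              rcases hpm u v with h|h <;> rw [h] <;>
                · have : i / 2 = j / 2 := by omega
                  rw [this]; omega
          · -- magnitudes differ
            apply L1
            rcases habs_rest u hu with h1 | ⟨h1, h1e, h1l⟩ <;>
              rcases habs_rest v hv with h2 | ⟨h2, h2e, h2l⟩ <;> rw [h1, h2] <;> omega
        · apply L1; rw [habs_tri v hv]
          rcases habs_rest u hu with h1 | ⟨h1, _, _⟩ <;> omega
        · apply L1; rw [habs_tri u hu]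
          rcases habs_rest v hv with h1 | ⟨h1, _, _⟩ <;> omega
        · -- both in triangle
          have hu' : u ∈ s := by simpa [hrest] using hu
          have hv' : v ∈ s := by simpa [hrest] using hv
          rw [hs] at hu' hv'
          simp only [Finset.mem_insert, Finset.mem_singleton] at hu' hv'
          rcases hu' with h1|h1|h1 <;> rcases hv' with h2|h2|h2 <;> rw [h1, h2] at hadj ⊢
          · exact absurd rfl hadj
          · rw [hva, hvb]
            rcases hpm a b with h|h <;> rw [h] <;> norm_num
          · rw [hva, hvc]
            rcases hpm a c with h|h <;> rw [h] <;> norm_num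
          · rw [hvb, hva, hsymm b a]
            rcases hpm a b with h|h <;> rw [h] <;> norm_num
          · exact absurd rfl hadj
          · rw [hvb, hvc]
            rcases hpm a b with h3|h3 <;> rcases hpm b c with h4|h4 <;>
              rcases hpm a c with h5|h5 <;> rw [h3, h4, h5] at hneg ⊢ <;> revert hneg <;> norm_num
          · rw [hvc, hva, hsymm c a]
            rcases hpm a c with h|h <;> rw [h] <;> norm_num
          · rw [hvc, hvb, hsymm c b]
            rcases hpm a b with h3|h3 <;> rcases hpm b c with h4|h4 <;>
              rcases hpm a c with h5|h5 <;> rw [h3, h4, h5] at hneg ⊢ <;> revert hneg <;> norm_num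
          · exact absurd rfl hadj
      · -- Mset membership
        intro v
        simp only [Mset, Set.mem_setOf_eq]
        by_cases h : v ∈ rest
        · have hilt : ((e ⟨v, h⟩ : ℕ)) < n - 3 := (e ⟨v, h⟩).isLt
          rcases habs_rest v h with h1 | ⟨h1, h1e, h1l⟩
          · constructor
            · rw [h1]
              by_cases ho : (e ⟨v, h⟩ : ℕ) % 2 = 1
              · omega
              · by_cases h2 : (e ⟨v, h⟩ : ℕ) + 1 < n - 3
                · omega
                · have h0 : (φ v).natAbs = 0 := by
                    rw [val_last v h (by omega) h2]; rfl
                  omega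
            · left; exact Int.natAbs_ne_zero.mp (by rw [h1]; omega)
          · constructor
            · omega
            · right; omega
        · constructor
          · rw [habs_tri v h]; omega
          · left; exact Int.natAbs_ne_zero.mp (by rw [habs_tri v h]; omega)
  exact Nat.sInf_le hcol
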